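/- Pollard's virial theorem, forward direction: let q(t) be a solution of Newton's N-body equations defined for all t ∈ ℝ with total energy E, and suppose I(t)/t² → 0 as t → +∞ and as t → −∞. Then the time averages ⟨K⟩ = lim_{T→∞} (1/(2T))∫_{−T}^{T} K(t) dt and ⟨U⟩ = lim_{T→∞} (1/(2T))∫_{−T}^{T} U(q(t)) dt both exist as finite limits and satisfy the virial equation: 2⟨K⟩ = ⟨U⟩, ⟨U⟩ = −2E, and ⟨K⟩ = −E. -/

import Mathlib

open Finset Filter MeasureTheory
open scoped RealInnerProductSpace

noncomputable section

/-- Configuration space of `N` bodies in `ℝ³`. -/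
abbrev Config (N : ℕ) := Fin N → EuclideanSpace ℝ (Fin 3)

/-- A configuration is collision-free if all bodies occupy distinct positions. -/
def CollisionFree {N : ℕ} (q : Config N) : Prop :=
  ∀ a b : Fin N, a ≠ b → q a ≠ q b

/-- The Newtonian potential `U(q) = G ∑_{a<b} m_a m_b / |q_a - q_b|`. -/
def potU {N : ℕ} (G : ℝ) (m : Fin N → ℝ) (q : Config N) : ℝ :=
  G * ∑ a : Fin N, ∑ b : Fin N, if a < b then m a * m b / ‖q a - q b‖ else 0

/-- Kinetic energy `K = (1/2) ∑_a m_a |v_a|²`. -/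
def kinE {N : ℕ} (m : Fin N → ℝ) (v : Config N) : ℝ :=
  (1 / 2) * ∑ a : Fin N, m a * ‖v a‖ ^ 2

/-- Moment of inertia `I = ∑_a m_a |q_a|²`. -/
def momI {N : ℕ} (m : Fin N → ℝ) (q : Config N) : ℝ :=
  ∑ a : Fin N, m a * ‖q a‖ ^ 2

/-- `q, v : ℝ → Config N` is a solution of Newton's N-body equations on `J`:
at each time in `J` the configuration is collision-free, `v` is the derivative
of `q`, and the acceleration satisfies
`m_a q̈_a = G ∑_{b ≠ a} m_a m_b (q_b - q_a)/|q_b - q_a|³`. -/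
def IsSolutionOn {N : ℕ} (G : ℝ) (m : Fin N → ℝ) (J : Set ℝ)
    (q v : ℝ → Config N) : Prop :=
  ∀ t ∈ J,
    CollisionFree (q t) ∧
    (∀ a, HasDerivAt (fun s => q s a) (v t a) t) ∧
    (∀ a, ∃ acc : EuclideanSpace ℝ (Fin 3),
      HasDerivAt (fun s => v s a) acc t ∧
      m a • acc = ∑ b ∈ univ.filter (fun b => b ≠ a),
        (G * m a * m b / ‖q t b - q t a‖ ^ 3) • (q t b - q t a))

lemma sum_pairs {N : ℕ} (h : Fin N → Fin N → ℝ) :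
    ∑ a : Fin N, ∑ b ∈ univ.filter (fun b => b ≠ a), h a b
      = ∑ a : Fin N, ∑ b : Fin N, if a < b then h a b + h b a else 0 := by
  have step1 : ∑ a : Fin N, ∑ b ∈ univ.filter (fun b => b ≠ a), h a b
      = ∑ a : Fin N, ∑ b : Fin N,
          ((if a < b then h a b else 0) + (if b < a then h a b else 0)) := by
    refine Finset.sum_congr rfl fun a _ => ?_
    rw [Finset.sum_filter]
    refine Finset.sum_congr rfl fun b _ => ?_
    rcases lt_trichotomy a b with hab | rfl | hab
    · simp [hab, hab.ne', not_lt.2 hab.le]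
    · simp
    · simp [hab, hab.ne, not_lt.2 hab.le]
  rw [step1]
  rw [Finset.sum_congr rfl (fun a _ => Finset.sum_add_distrib), Finset.sum_add_distrib]
  have swap : ∑ a : Fin N, ∑ b : Fin N, (if b < a then h a b else 0)
      = ∑ a : Fin N, ∑ b : Fin N, (if a < b then h b a else 0) := Finset.sum_comm
  rw [swap, ← Finset.sum_add_distrib]
  refine Finset.sum_congr rfl fun a _ => ?_
  rw [← Finset.sum_add_distrib]
  refine Finset.sum_congr rfl fun b _ => ?_
  by_cases hab : a < b <;> simp [hab]

lemma force_inner {N : ℕ} (G : ℝ) (m : Fin N → ℝ) (qc : Config N) (hq : CollisionFree qc) :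
    ∑ a : Fin N, ⟪qc a, ∑ b ∈ univ.filter (fun b => b ≠ a),
        (G * m a * m b / ‖qc b - qc a‖ ^ 3) • (qc b - qc a)⟫
      = - potU G m qc := by
  have e1 : ∀ a : Fin N, ⟪qc a, ∑ b ∈ univ.filter (fun b => b ≠ a),
      (G * m a * m b / ‖qc b - qc a‖ ^ 3) • (qc b - qc a)⟫
      = ∑ b ∈ univ.filter (fun b => b ≠ a),
          (G * m a * m b / ‖qc b - qc a‖ ^ 3) * ⟪qc a, qc b - qc a⟫ := by
    intro a
    rw [inner_sum]
    exact Finset.sum_congr rfl fun b _ => real_inner_smul_right _ _ _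
  rw [Finset.sum_congr rfl fun a _ => e1 a,
    sum_pairs (fun a b => (G * m a * m b / ‖qc b - qc a‖ ^ 3) * ⟪qc a, qc b - qc a⟫)]
  have key : ∀ a b : Fin N, a < b →
      (G * m a * m b / ‖qc b - qc a‖ ^ 3) * ⟪qc a, qc b - qc a⟫
        + (G * m b * m a / ‖qc a - qc b‖ ^ 3) * ⟪qc b, qc a - qc b⟫
      = -(G * (m a * m b / ‖qc a - qc b‖)) := by
    intro a b hab
    have hne : qc a - qc b ≠ 0 := sub_ne_zero.2 (hq a b hab.ne)
    have hr : ‖qc a - qc b‖ ≠ 0 := norm_ne_zero_iff.2 hne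
    have hnorm : ‖qc b - qc a‖ = ‖qc a - qc b‖ := norm_sub_rev _ _
    have hinner : ⟪qc a, qc b - qc a⟫ + ⟪qc b, qc a - qc b⟫ = -(‖qc a - qc b‖ ^ 2) := by
      have h1 := norm_sub_sq_real (qc a) (qc b)
      have h2 : ⟪qc b, qc a⟫ = ⟪qc a, qc b⟫ := real_inner_comm _ _
      simp only [inner_sub_right, real_inner_self_eq_norm_sq, h2]
      linarith
    rw [hnorm]
    set r := ‖qc a - qc b‖ with hrdef
    set X := ⟪qc a, qc b - qc a⟫ with hX
    set Y := ⟪qc b, qc a - qc b⟫ with hY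
    rw [show X = -(r ^ 2) - Y from by linarith]
    field_simp
    ring
  have hpot : - potU G m qc
      = ∑ a : Fin N, ∑ b : Fin N, if a < b then -(G * (m a * m b / ‖qc a - qc b‖)) else 0 := by
    unfold potU
    rw [Finset.mul_sum, ← Finset.sum_neg_distrib]
    refine Finset.sum_congr rfl fun a _ => ?_
    rw [Finset.mul_sum, ← Finset.sum_neg_distrib]
    refine Finset.sum_congr rfl fun b _ => ?_
    split_ifs <;> simp
  rw [hpot]
  refine Finset.sum_congr rfl fun a _ => Finset.sum_congr rfl fun b _ => ?_
  split_ifs with hab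
  · exact key a b hab
  · rfl

set_option maxHeartbeats 1000000 in
lemma virial_slope (Jf φ : ℝ → ℝ) (hJ : ∀ t, HasDerivAt Jf (φ t) t) (hφ : Monotone φ)
    (c : ℝ) (hc : Tendsto (fun t => Jf t / t ^ 2) atTop (nhds c)) :
    Tendsto (fun t => φ t / t) atTop (nhds (2 * c)) := by
  rw [Metric.tendsto_atTop] at hc ⊢
  intro ε hε
  set η : ℝ := min 1 (ε / (4 * (|c| + 1))) with hηdef
  have hη0 : 0 < η := lt_min one_pos (by positivity)
  have hη1 : η ≤ 1 := min_le_left _ _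
  have hηc : η * c ≤ ε / 4 := by
    have h2 : η ≤ ε / (4 * (|c| + 1)) := min_le_right _ _
    have h3 : η * c ≤ η * |c| := mul_le_mul_of_nonneg_left (le_abs_self c) hη0.le
    have h4 : η * |c| ≤ (ε / (4 * (|c| + 1))) * (|c| + 1) :=
      mul_le_mul h2 (by linarith [abs_nonneg c]) (abs_nonneg c) (by positivity)
    have hne : |c| + 1 ≠ 0 := by positivity
    have h5 : (ε / (4 * (|c| + 1))) * (|c| + 1) = ε / 4 := by field_simp
    linarith
  set δ : ℝ := ε * η / 20 with hδdef
  have hδ0 : 0 < δ := by positivity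
  obtain ⟨M₀, hM₀⟩ := hc δ hδ0
  refine ⟨max 1 ((|M₀| + 1) * (1 + η)), fun T hT => ?_⟩
  have hT1 : (1 : ℝ) ≤ T := le_trans (le_max_left _ _) hT
  have hT0 : (0 : ℝ) < T := by linarith
  have hp : (0 : ℝ) < 1 + η := by linarith
  have hTM : (|M₀| + 1) * (1 + η) ≤ T := le_trans (le_max_right _ _) hT
  have hM3 : M₀ ≤ T / (1 + η) := by
    rw [le_div_iff₀ hp]
    nlinarith [le_abs_self M₀, abs_nonneg M₀]
  have hM1 : M₀ ≤ T := le_trans hM3 (div_le_self hT0.le (by linarith))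
  have hM2 : M₀ ≤ (1 + η) * T := le_trans hM1 (by nlinarith)
  -- two-sided bounds on Jf
  have bound : ∀ x : ℝ, M₀ ≤ x → 0 < x →
      (c - δ) * x ^ 2 < Jf x ∧ Jf x < (c + δ) * x ^ 2 := by
    intro x hx hx0
    have h := hM₀ x hx
    rw [Real.dist_eq, abs_lt] at h
    have hx2 : (0 : ℝ) < x ^ 2 := by positivity
    have e : Jf x / x ^ 2 * x ^ 2 = Jf x := div_mul_cancel₀ _ (ne_of_gt hx2)
    constructor
    · nlinarith [mul_lt_mul_of_pos_right h.1 hx2]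
    · nlinarith [mul_lt_mul_of_pos_right h.2 hx2]
  have b1 := bound ((1 + η) * T) hM2 (by positivity)
  have b2 := bound T hM1 hT0
  have b3 := bound (T / (1 + η)) hM3 (by positivity)
  -- MVT upper
  have hlt1 : T < (1 + η) * T := by nlinarith
  obtain ⟨ξ, hξ, hsl⟩ := exists_hasDerivAt_eq_slope Jf φ hlt1
    (fun x _ => (hJ x).continuousAt.continuousWithinAt) (fun x _ => hJ x)
  have hup : φ T ≤ (Jf ((1 + η) * T) - Jf T) / ((1 + η) * T - T) := by
    rw [← hsl]; exact hφ hξ.1.le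
  have hup' : φ T * (η * T) ≤ Jf ((1 + η) * T) - Jf T := by
    have hden : (1 + η) * T - T = η * T := by ring
    rw [hden] at hup
    exact (le_div_iff₀ (by positivity)).1 hup
  -- MVT lower
  have hlt2 : T / (1 + η) < T := div_lt_self hT0 (by linarith)
  obtain ⟨ζ, hζ, hsl2⟩ := exists_hasDerivAt_eq_slope Jf φ hlt2
    (fun x _ => (hJ x).continuousAt.continuousWithinAt) (fun x _ => hJ x)
  set u : ℝ := T / (1 + η) with hudef
  have hu0 : 0 < u := by positivity
  have hTu : T = u * (1 + η) := by rw [hudef]; field_simp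
  have hlo : (Jf T - Jf u) / (T - u) ≤ φ T := by
    rw [← hsl2]; exact hφ hζ.2.le
  have hlo' : Jf T - Jf u ≤ φ T * (η * u) := by
    have hden : T - u = η * u := by rw [hTu]; ring
    rw [hden] at hlo
    exact (div_le_iff₀ (by positivity)).1 hlo
  rw [Real.dist_eq, abs_lt]
  constructor
  · -- lower bound : -ε < φ T / T - 2 c
    have keyL : (2 * c - ε) * η * (1 + η) < (c - δ) * (1 + η) ^ 2 - (c + δ) := by
      rw [hδdef]
      have h6 : η * (η * c) ≤ η * (ε / 4) := mul_le_mul_of_nonneg_left hηc hη0.le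
      have e1 : 0 < ε * η := mul_pos hε hη0
      have e2 : 0 ≤ ε * η * η := mul_nonneg e1.le hη0.le
      have e3 : ε * η * η * η ≤ ε * η * η := mul_le_of_le_one_right e2 hη1
      linarith [h6, e1, e2, e3]
    have hu2 : (0 : ℝ) < u ^ 2 := by positivity
    have hb2' : (c - δ) * ((1 + η) * u) ^ 2 < Jf T := by
      have heq : (c - δ) * ((1 + η) * u) ^ 2 = (c - δ) * T ^ 2 := by rw [hTu]; ring
      linarith [b2.1, heq]
    have step : ((2 * c - ε) * T) * (η * u) < φ T * (η * u) := by
      have hnum : (2 * c - ε) * η * (1 + η) * u ^ 2 < ((c - δ) * (1 + η) ^ 2 - (c + δ)) * u ^ 2 :=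
        mul_lt_mul_of_pos_right keyL hu2
      have r3 : ((2 * c - ε) * T) * (η * u) = (2 * c - ε) * η * (1 + η) * u ^ 2 := by
        rw [hTu]; ring
      linarith [hlo', hb2', b3.2, hnum, r3]
    have hφT : (2 * c - ε) * T < φ T :=
      lt_of_mul_lt_mul_right step (by positivity)
    have := (lt_div_iff₀ hT0).2 hφT
    linarith
  · -- upper bound : φ T / T - 2 c < ε
    have keyU : (c + δ) * (1 + η) ^ 2 - (c - δ) < (2 * c + ε) * η := by
      rw [hδdef]
      have h6 : η * (η * c) ≤ η * (ε / 4) := mul_le_mul_of_nonneg_left hηc hη0.le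
      have e1 : 0 < ε * η := mul_pos hε hη0
      have e2 : 0 ≤ ε * η * η := mul_nonneg e1.le hη0.le
      have e3 : ε * η * η * η ≤ ε * η * η := mul_le_of_le_one_right e2 hη1
      have e4 : ε * η * η ≤ ε * η := mul_le_of_le_one_right e1.le hη1
      linarith [h6, e1, e2, e3, e4]
    have hT2 : (0 : ℝ) < T ^ 2 := by positivity
    have step : φ T * (η * T) < ((2 * c + ε) * T) * (η * T) := by
      have hnum : ((c + δ) * (1 + η) ^ 2 - (c - δ)) * T ^ 2 < (2 * c + ε) * η * T ^ 2 :=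
        mul_lt_mul_of_pos_right keyU hT2
      have r1 : (c + δ) * ((1 + η) * T) ^ 2 = ((c + δ) * (1 + η) ^ 2) * T ^ 2 := by ring
      have r2 : ((2 * c + ε) * T) * (η * T) = (2 * c + ε) * η * T ^ 2 := by ring
      linarith [hup', b1.2, b2.1, hnum, r1, r2]
    have hφT : φ T < (2 * c + ε) * T :=
      lt_of_mul_lt_mul_right step (by positivity)
    have := (div_lt_iff₀ hT0).2 hφT
    linarith

lemma virial_slope_bot (Jf φ : ℝ → ℝ) (hJ : ∀ t, HasDerivAt Jf (φ t) t) (hφ : Monotone φ)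
    (c : ℝ) (hc : Tendsto (fun t => Jf t / t ^ 2) atBot (nhds c)) :
    Tendsto (fun t => φ t / t) atBot (nhds (2 * c)) := by
  have hJ' : ∀ t, HasDerivAt (fun s => Jf (-s)) (-φ (-t)) t := by
    intro t
    have h := (hJ (-t)).comp t (hasDerivAt_neg t)
    rw [show -φ (-t) = φ (-t) * -1 by ring]
    exact h
  have hφ' : Monotone fun t => -φ (-t) :=
    fun s t hst => neg_le_neg (hφ (neg_le_neg hst))
  have hc' : Tendsto (fun t => Jf (-t) / t ^ 2) atTop (nhds c) := by
    have h := hc.comp tendsto_neg_atTop_atBot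
    refine h.congr fun t => ?_
    simp [Function.comp, neg_sq]
  have h := virial_slope _ _ hJ' hφ' c hc'
  have h2 := h.comp tendsto_neg_atBot_atTop
  refine h2.congr fun t => ?_
  show -φ (- -t) / -t = φ t / t
  rw [neg_neg, neg_div_neg_eq]

/-- Pollard's virial theorem, forward direction: if a solution
defined for all time satisfies `I(t) = o(t²)` as `t → ±∞`, then the time
averages of `K` and `U` exist and satisfy the virial equation
`⟨K⟩ = -E` and `⟨U⟩ = -2E` (hence `2⟨K⟩ = ⟨U⟩`). -/
theorem pollard_virial_forward
    (N : ℕ) (hN : 2 ≤ N) (G : ℝ) (hG : 0 < G)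
    (m : Fin N → ℝ) (hm : ∀ a, 0 < m a)
    (q v : ℝ → Config N)
    (hsol : IsSolutionOn G m Set.univ q v)
    (E : ℝ) (hE : ∀ t : ℝ, kinE m (v t) - potU G m (q t) = E)
    (hItop : Tendsto (fun t : ℝ => momI m (q t) / t ^ 2) atTop (nhds 0))
    (hIbot : Tendsto (fun t : ℝ => momI m (q t) / t ^ 2) atBot (nhds 0)) :
    Tendsto (fun T : ℝ => (1 / (2 * T)) * ∫ t in (-T)..T, kinE m (v t))
      atTop (nhds (-E)) ∧
    Tendsto (fun T : ℝ => (1 / (2 * T)) * ∫ t in (-T)..T, potU G m (q t))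
      atTop (nhds (-2 * E)) := by
  have hCF : ∀ t, CollisionFree (q t) := fun t => (hsol t trivial).1
  have hqd : ∀ t (a : Fin N), HasDerivAt (fun s => q s a) (v t a) t :=
    fun t => (hsol t trivial).2.1
  choose acc hacc1 hacc2 using fun t (a : Fin N) => (hsol t trivial).2.2 a
  -- derivative of the moment of inertia
  set gfun : ℝ → ℝ := fun t => ∑ a : Fin N, m a * (⟪q t a, v t a⟫ + ⟪v t a, q t a⟫)
    with hgfun
  have hfd : ∀ t, HasDerivAt (fun s => momI m (q s)) (gfun t) t := by
    intro t
    have h1 : HasDerivAt (fun s => ∑ a : Fin N, m a * ⟪q s a, q s a⟫)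
        (∑ a : Fin N, m a * (⟪q t a, v t a⟫ + ⟪v t a, q t a⟫)) t := by
      apply HasDerivAt.fun_sum
      intro a _
      exact ((hqd t a).inner ℝ (hqd t a)).const_mul (m a)
    have heq : (fun s => momI m (q s)) = fun s => ∑ a : Fin N, m a * ⟪q s a, q s a⟫ := by
      funext s
      unfold momI
      exact Finset.sum_congr rfl fun a _ => by rw [real_inner_self_eq_norm_sq]
    rw [heq, hgfun]
    exact h1
  -- derivative of gfun (Lagrange–Jacobi)
  have hgd : ∀ t, HasDerivAt gfun (2 * kinE m (v t) + 2 * E) t := by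
    intro t
    have h1 : HasDerivAt gfun
        (∑ a : Fin N, m a * ((⟪q t a, acc t a⟫ + ⟪v t a, v t a⟫)
          + (⟪v t a, v t a⟫ + ⟪acc t a, q t a⟫))) t := by
      rw [hgfun]
      apply HasDerivAt.fun_sum
      intro a _
      exact (((hqd t a).inner ℝ (hacc1 t a)).add
        ((hacc1 t a).inner ℝ (hqd t a))).const_mul (m a)
    have hDval : (∑ a : Fin N, m a * ((⟪q t a, acc t a⟫ + ⟪v t a, v t a⟫)
          + (⟪v t a, v t a⟫ + ⟪acc t a, q t a⟫)))
        = 2 * kinE m (v t) + 2 * E := by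
      have e : ∀ a : Fin N, m a * ((⟪q t a, acc t a⟫ + ⟪v t a, v t a⟫)
            + (⟪v t a, v t a⟫ + ⟪acc t a, q t a⟫))
          = 2 * (m a * ‖v t a‖ ^ 2) + 2 * ⟪q t a, m a • acc t a⟫ := by
        intro a
        rw [real_inner_smul_right, real_inner_comm (acc t a) (q t a),
          real_inner_self_eq_norm_sq]
        ring
      rw [Finset.sum_congr rfl fun a _ => e a, Finset.sum_add_distrib,
        ← Finset.mul_sum, ← Finset.mul_sum]
      have e2 : ∀ a : Fin N, ⟪q t a, m a • acc t a⟫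
          = ⟪q t a, ∑ b ∈ univ.filter (fun b => b ≠ a),
              (G * m a * m b / ‖q t b - q t a‖ ^ 3) • (q t b - q t a)⟫ :=
        fun a => by rw [hacc2 t a]
      rw [Finset.sum_congr rfl fun a _ => e2 a, force_inner G m (q t) (hCF t)]
      have hk : ∑ a : Fin N, m a * ‖v t a‖ ^ 2 = 2 * kinE m (v t) := by
        rw [kinE]; ring
      rw [hk]
      have := hE t
      linarith
    rw [← hDval]
    exact h1
  -- continuity of kinetic energy
  have hvc : ∀ a : Fin N, Continuous fun t => v t a := by
    intro a
    rw [continuous_iff_continuousAt]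
    exact fun t => (hacc1 t a).continuousAt
  have hKC : Continuous fun t => kinE m (v t) := by
    unfold kinE
    exact continuous_const.mul
      (continuous_finset_sum _ fun a _ => continuous_const.mul ((hvc a).norm.pow 2))
  -- fundamental theorem of calculus
  have hFTC : ∀ T : ℝ, ∫ t in (-T)..T, (2 * kinE m (v t) + 2 * E) = gfun T - gfun (-T) := by
    intro T
    exact intervalIntegral.integral_eq_sub_of_hasDerivAt (fun t _ => hgd t)
      (((continuous_const.mul hKC).add continuous_const).intervalIntegrable _ _)
  have hKform : ∀ T : ℝ, ∫ t in (-T)..T, kinE m (v t)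
      = (gfun T - gfun (-T)) / 2 - 2 * T * E := by
    intro T
    have h1 := hFTC T
    rw [intervalIntegral.integral_add (f := fun t => 2 * kinE m (v t)) ((continuous_const.mul hKC).intervalIntegrable _ _)
        intervalIntegrable_const, intervalIntegral.integral_const_mul,
        intervalIntegral.integral_const, smul_eq_mul] at h1
    linarith
  -- the convex auxiliary function
  set φf : ℝ → ℝ := fun t => gfun t - 4 * E * t with hφf
  have hJd : ∀ t, HasDerivAt (fun s => momI m (q s) - 2 * E * s ^ 2) (φf t) t := by
    intro t
    have h2 : HasDerivAt (fun s : ℝ => 2 * E * s ^ 2) (4 * E * t) t := by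
      have h := (hasDerivAt_pow 2 t).const_mul (2 * E)
      rw [show 4 * E * t = 2 * E * (((2 : ℕ) : ℝ) * t ^ (2 - 1)) by
        rw [Nat.cast_ofNat, show (2:ℕ) - 1 = 1 from rfl, pow_one]; ring]
      exact h
    rw [hφf]
    exact (hfd t).sub h2
  have hφd : ∀ t, HasDerivAt φf (2 * potU G m (q t)) t := by
    intro t
    have h2 : HasDerivAt (fun s : ℝ => 4 * E * s) (4 * E) t := by
      simpa using (hasDerivAt_id t).const_mul (4 * E)
    have h1 : HasDerivAt φf (2 * kinE m (v t) + 2 * E - 4 * E) t := by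
      rw [hφf]
      exact (hgd t).sub h2
    have := hE t
    convert h1 using 1
    linarith
  have hUnn : ∀ t, 0 ≤ potU G m (q t) := by
    intro t
    unfold potU
    apply mul_nonneg hG.le
    apply Finset.sum_nonneg
    intro a _
    apply Finset.sum_nonneg
    intro b _
    split_ifs
    · exact div_nonneg (mul_nonneg (hm a).le (hm b).le) (norm_nonneg _)
    · exact le_refl 0
  have hφmono : Monotone φf := by
    apply monotone_of_deriv_nonneg
    · exact fun t => (hφd t).differentiableAt
    · intro t
      rw [(hφd t).deriv]
      linarith [hUnn t]
  -- I(t)/t² → 0 gives J(t)/t² → -2E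
  have hJtop : Tendsto (fun t => (momI m (q t) - 2 * E * t ^ 2) / t ^ 2)
      atTop (nhds (0 - 2 * E)) := by
    refine Tendsto.congr' ?_ (hItop.sub_const (2 * E))
    filter_upwards [eventually_ne_atTop (0 : ℝ)] with t ht
    rw [sub_div, mul_div_assoc, div_self (pow_ne_zero _ ht), mul_one]
  have hJbot : Tendsto (fun t => (momI m (q t) - 2 * E * t ^ 2) / t ^ 2)
      atBot (nhds (0 - 2 * E)) := by
    refine Tendsto.congr' ?_ (hIbot.sub_const (2 * E))
    filter_upwards [eventually_ne_atBot (0 : ℝ)] with t ht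
    rw [sub_div, mul_div_assoc, div_self (pow_ne_zero _ ht), mul_one]
  have hφtop : Tendsto (fun t => φf t / t) atTop (nhds (2 * (0 - 2 * E))) :=
    virial_slope _ _ hJd hφmono _ hJtop
  have hφbot : Tendsto (fun t => φf t / t) atBot (nhds (2 * (0 - 2 * E))) :=
    virial_slope_bot _ _ hJd hφmono _ hJbot
  have hT1 : Tendsto (fun T => φf (-T) / T) atTop (nhds (-(2 * (0 - 2 * E)))) := by
    have h := hφbot.comp tendsto_neg_atTop_atBot
    have h2 := h.neg
    refine h2.congr fun T => ?_
    show -(φf (-T) / -T) = φf (-T) / T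
    rw [div_neg, neg_neg]
  -- the limit for K
  have hKlim : Tendsto (fun T : ℝ => (1 / (2 * T)) * ∫ t in (-T)..T, kinE m (v t))
      atTop (nhds (-E)) := by
    have hmain := ((hφtop.sub hT1).div_const 4).add_const E
    have hval : (2 * (0 - 2 * E) - -(2 * (0 - 2 * E))) / 4 + E = -E := by ring
    rw [hval] at hmain
    refine hmain.congr' ?_
    filter_upwards [eventually_ge_atTop (1 : ℝ)] with T hT
    have hT0 : T ≠ 0 := by linarith
    have hgφ : ∀ s, gfun s = φf s + 4 * E * s := fun s => by rw [hφf]; ring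
    rw [hKform T, hgφ T, hgφ (-T)]
    field_simp
    ring
  refine ⟨hKlim, ?_⟩
  -- the limit for U
  have hUform : ∀ T : ℝ, ∫ t in (-T)..T, potU G m (q t)
      = (∫ t in (-T)..T, kinE m (v t)) - 2 * T * E := by
    intro T
    have hfun : (fun t => potU G m (q t)) = fun t => kinE m (v t) - E :=
      funext fun t => by linarith [hE t]
    rw [hfun, intervalIntegral.integral_sub (hKC.intervalIntegrable _ _)
      intervalIntegrable_const, intervalIntegral.integral_const, smul_eq_mul]
    ring
  have hmain := hKlim.sub_const E
  have hval : -E - E = -2 * E := by ring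
  rw [hval] at hmain
  refine hmain.congr' ?_
  filter_upwards [eventually_ge_atTop (1 : ℝ)] with T hT
  have hT0 : T ≠ 0 := by linarith
  rw [hUform T, mul_sub]
  have h2 : 1 / (2 * T) * (2 * T * E) = E := by field_simp
  rw [h2]
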